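/- There is no derivation in the system IL of a sequent A ⊢ I in which A is an I-free α-formula (one in which the constant I does not occur). -/
import Mathlib


/-- Prime α-formulae: a propositional letter, or an implication between α-formulae.
α-formulae are formulae with `⊗` strictly associative and `I` a strict unit; hence an
α-formula is faithfully represented as the list of its prime factors: the empty list
is the constant `I` and `⊗` is concatenation of lists. -/
inductive PForm : Type
  | atom : ℕ → PForm
  | imp : List PForm → List PForm → PForm

/-- α-formulae. -/
abbrev AForm : Type := List PForm

/-- Derivability in the system `IL`.  Sequents are `G ⊢ A` with `G` and `A`
α-formulae; axioms `A ⊢ A`; rules: interchange, cut, `→⊢`, `⊢→` and `⊗⊢⊗`. -/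
inductive ILDeriv : AForm → AForm → Prop
  | ax (A : AForm) : ILDeriv A A
  | interchange {G A B E D : AForm} :
      ILDeriv (G ++ A ++ B ++ E) D → ILDeriv (G ++ B ++ A ++ E) D
  | cut {C A G E D : AForm} :
      ILDeriv C A → ILDeriv (G ++ A ++ E) D → ILDeriv (G ++ C ++ E) D
  | impL {C A B G D : AForm} :
      ILDeriv C A → ILDeriv (B ++ G) D → ILDeriv (C ++ [PForm.imp A B] ++ G) D
  | impR {A G C : AForm} : ILDeriv (A ++ G) C → ILDeriv G [PForm.imp A C]
  | tensR {A B C E : AForm} : ILDeriv A C → ILDeriv B E → ILDeriv (A ++ B) (C ++ E)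

mutual
  /-- A prime α-formula in which the constant `I` does not occur (recall that in the
  strict representation `I` is the empty list of prime factors). -/
  def PForm.Ifree : PForm → Prop
    | .atom _ => True
    | .imp A B => A ≠ [] ∧ B ≠ [] ∧ AForm.IfreeList A ∧ AForm.IfreeList B
  /-- All prime α-formulae of the list are `I`-free. -/
  def AForm.IfreeList : List PForm → Prop
    | [] => True
    | x :: xs => x.Ifree ∧ AForm.IfreeList xs
end

/-- An α-formula in which the constant `I` does not occur. -/
def AForm.Ifree (A : AForm) : Prop := A ≠ [] ∧ AForm.IfreeList A

open Pointwise in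
mutual
  /-- Interpretation of a prime α-formula as a set of integers. -/
  def semP : PForm → Set ℤ
    | .atom _ => Set.univ
    | .imp A B => {m | ∀ a ∈ semL A, m + a ∈ semL B}
  /-- Interpretation of an α-formula as a set of integers. -/
  def semL : List PForm → Set ℤ
    | [] => {0}
    | x :: xs => semP x + semL xs
end

open Pointwise in
theorem semL_append (G H : List PForm) : semL (G ++ H) = semL G + semL H := by
  induction G with
  | nil =>
      simp [semL, Set.singleton_add]
  | cons x xs ih =>
      simp only [List.cons_append, semL, List.append_eq, ih, add_assoc]

open Pointwise in
theorem mem_semL_append {G H : List PForm} {m : ℤ} :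
    m ∈ semL (G ++ H) ↔ ∃ a ∈ semL G, ∃ b ∈ semL H, a + b = m := by
  rw [semL_append]; exact Set.mem_add

open Pointwise in
theorem sound {G D : AForm} (h : ILDeriv G D) : semL G ⊆ semL D := by
  induction h with
  | ax A => exact subset_rfl
  | interchange _ ih =>
      intro m hm
      apply ih
      simp only [mem_semL_append] at hm ⊢
      obtain ⟨x, ⟨y, ⟨g, hg, b, hb, rfl⟩, a, ha, rfl⟩, e, he, rfl⟩ := hm
      exact ⟨(g + a) + b, ⟨g + a, ⟨g, hg, a, ha, rfl⟩, b, hb, rfl⟩, e, he, by ring⟩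
  | cut h1 _ ih1 ih2 =>
      intro m hm
      apply ih2
      simp only [mem_semL_append] at hm ⊢
      obtain ⟨x, ⟨g, hg, c, hc, rfl⟩, e, he, rfl⟩ := hm
      exact ⟨g + c, ⟨g, hg, c, ih1 hc, rfl⟩, e, he, rfl⟩
  | impL h1 _ ih1 ih2 =>
      intro m hm
      apply ih2
      simp only [mem_semL_append] at hm ⊢
      obtain ⟨x, ⟨c, hc, f, hf, rfl⟩, g, hg, rfl⟩ := hm
      rw [show ([PForm.imp _ _] : List PForm) = [PForm.imp _ _] ++ [] from rfl,
        mem_semL_append] at hf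
      obtain ⟨f', hf', z, hz, rfl⟩ := hf
      simp only [semL, Set.mem_singleton_iff] at hz
      subst hz
      simp only [semL, Set.mem_singleton_iff] at hf'
      rw [Set.add_singleton] at hf'
      obtain ⟨f'', hf'', rfl⟩ := hf'
      simp only [semP, Set.mem_setOf_eq] at hf''
      have hb := hf'' c (ih1 hc)
      refine ⟨f'' + c, hb, g, hg, by ring⟩
  | impR _ ih =>
      intro m hm
      show m ∈ semP _ + semL []
      refine Set.mem_add.2 ⟨m, ?_, 0, rfl, add_zero m⟩
      intro a ha
      have : a + m ∈ _ := ih (mem_semL_append.2 ⟨a, ha, m, hm, rfl⟩)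
      simpa [add_comm] using this
  | tensR _ _ ih1 ih2 =>
      intro m hm
      rw [mem_semL_append] at hm ⊢
      obtain ⟨a, ha, b, hb, rfl⟩ := hm
      exact ⟨a, ih1 ha, b, ih2 hb, rfl⟩

open Pointwise in
mutual
  theorem semP_univ (P : PForm) (h : P.Ifree) : semP P = Set.univ := by
    match P with
    | .atom n => rfl
    | .imp A B =>
        obtain ⟨-, hBne, -, hB⟩ := h
        have hBu := semL_univ B hBne hB
        ext m
        simp [semP, hBu]
  theorem semL_univ (A : List PForm) (hne : A ≠ []) (h : AForm.IfreeList A) :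
      semL A = Set.univ := by
    match A with
    | [x] =>
        obtain ⟨hx, -⟩ := h
        have hxu := semP_univ x hx
        ext m
        simp only [semL, Set.mem_univ, iff_true]
        exact Set.mem_add.2 ⟨m, hxu ▸ Set.mem_univ m, 0, rfl, add_zero m⟩
    | x :: y :: xs =>
        obtain ⟨hx, hrest⟩ := h
        have h1 := semP_univ x hx
        have h2 := semL_univ (y :: xs) (by simp) hrest
        have hstep : semL (x :: y :: xs) = semP x + semL (y :: xs) := by simp [semL]
        rw [hstep, h1, h2]
        ext m
        simp only [Set.mem_univ, iff_true, Set.mem_add]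
        exact ⟨m, trivial, 0, trivial, add_zero m⟩
end

/-- There is no derivation in `IL` of `A ⊢ I` with `A` an `I`-free α-formula. -/
theorem no_Ifree_derives_unit (A : AForm) (hA : A.Ifree) :
    ¬ILDeriv A ([] : AForm) := by
  intro h
  have hs := sound h
  rw [semL_univ A hA.1 hA.2] at hs
  have : (1 : ℤ) ∈ semL ([] : AForm) := hs (Set.mem_univ 1)
  simp [semL] at this
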